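/- Let (s, θ, ν) be a valid BLESS parameter set in which every latent variable has exactly two observed children, i.e., |s^{-1}(k)| = 2 for every k ∈ {1,…,K}, and fix k ∈ {1,…,K}. Then the following are equivalent: (S1) α_k is not independent of α_{-k} under ν; (S2) the conditional probability tables of the children of α_k are identifiable, meaning that every valid parameter set (s, θ̄, ν̄) with the same parent map s whose joint probability mass function agrees with that of (s, θ, ν) satisfies θ̄^{(j)}_{c|x} = θ^{(j)}_{c|x} for every j with s(j) = k, every c ∈ {1,…,d}, and every x ∈ {0,1}. -/

import Mathlib

open Finset

/-- Joint probability mass function of the observed vector `c : Fin p → Fin d` under the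
BLESS model with parent map `s`, conditional probability tables `θ` (where `θ j c x` is
`θ^{(j)}_{c|x}`), and latent proportion vector `ν`. -/
def blessPMF {K p d : ℕ} (s : Fin p → Fin K) (θ : Fin p → Fin d → Bool → ℝ)
    (ν : (Fin K → Bool) → ℝ) (c : Fin p → Fin d) : ℝ :=
  ∑ α : Fin K → Bool, ν α * ∏ j, θ j (c j) (α (s j))

/-- Validity of a BLESS parameter set `(θ, ν)`: all conditional probabilities strictly
between 0 and 1, columns of each conditional probability table summing to one, the
monotonicity constraint `θ^{(j)}_{c|1} > θ^{(j)}_{c|0}` for every non-last category `c`,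
strictly positive proportions summing to one. -/
structure BlessValid {K p d : ℕ} (θ : Fin p → Fin d → Bool → ℝ)
    (ν : (Fin K → Bool) → ℝ) : Prop where
  theta_pos : ∀ j c x, 0 < θ j c x
  theta_lt_one : ∀ j c x, θ j c x < 1
  theta_sum : ∀ j x, ∑ c, θ j c x = 1
  theta_mono : ∀ j (c : Fin d), (c : ℕ) + 1 < d → θ j c false < θ j c true
  nu_pos : ∀ α, 0 < ν α
  nu_sum : ∑ α, ν α = 1

/-- `α_k` is independent of `α_{-k}` under `ν`: for every pattern `α` (equivalently, for
every value `a` of the k-th coordinate and every configuration `t` of the remaining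
coordinates), `ν α` equals the product of the marginal probability that the k-th
coordinate equals `α k` and the marginal probability that the remaining coordinates
agree with those of `α`. -/
def indepAt {K : ℕ} (k : Fin K) (ν : (Fin K → Bool) → ℝ) : Prop :=
  ∀ α : Fin K → Bool,
    ν α = (∑ β : Fin K → Bool, if β k = α k then ν β else 0) *
          (∑ β : Fin K → Bool, if ∀ i, i ≠ k → β i = α i then ν β else 0)

section BlessAux

variable {K p d : ℕ}
private lemma bless_moment (s : Fin p → Fin K) (θ : Fin p → Fin d → Bool → ℝ)
    (ν : (Fin K → Bool) → ℝ) (h : Fin p → Fin d → ℝ) :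
    ∑ c : Fin p → Fin d, blessPMF s θ ν c * ∏ j, h j (c j)
      = ∑ α : Fin K → Bool, ν α * ∏ j, ∑ x, θ j x (α (s j)) * h j x := by
  simp only [blessPMF, Finset.sum_mul]
  rw [Finset.sum_comm]
  refine Finset.sum_congr rfl fun α _ => ?_
  rw [Fintype.prod_sum fun j x => θ j x (α (s j)) * h j x, Finset.mul_sum]
  refine Finset.sum_congr rfl fun c _ => ?_
  rw [mul_assoc, ← Finset.prod_mul_distrib]

private lemma sum_split (s : Fin p → Fin K) (k : Fin K) {j1 j2 : Fin p} (hne : j1 ≠ j2)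
    (h1 : s j1 = k) (h2 : s j2 = k) (ν : (Fin K → Bool) → ℝ) (F : Fin p → Bool → ℝ) :
    ∑ α : Fin K → Bool, ν α * ∏ j, F j (α (s j))
      = ∑ a : Bool, F j1 a * F j2 a *
          ∑ α ∈ univ.filter (fun α : Fin K → Bool => α k = a),
            ν α * ∏ j ∈ (univ.erase j1).erase j2, F j (α (s j)) := by
  rw [← Finset.sum_fiberwise univ (fun α : Fin K → Bool => α k)
        (fun α => ν α * ∏ j, F j (α (s j)))]
  refine Finset.sum_congr rfl fun a _ => ?_
  rw [Finset.mul_sum]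
  refine Finset.sum_congr rfl fun α hα => ?_
  have hαk : α k = a := (Finset.mem_filter.mp hα).2
  rw [← Finset.mul_prod_erase univ _ (Finset.mem_univ j1),
      ← Finset.mul_prod_erase _ _ (Finset.mem_erase.mpr ⟨hne.symm, Finset.mem_univ j2⟩),
      h1, h2, hαk]
  ring

private noncomputable def dvec {d : ℕ} (u : Bool → Fin d → ℝ) (i0 : Fin d) (x : Bool) :
    Fin d → ℝ :=
  fun c => ((if c = i0 then 1 else 0) - u (!x) i0) / (u x i0 - u (!x) i0)

private lemma dvec_dual {d : ℕ} (u : Bool → Fin d → ℝ) (i0 : Fin d)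
    (hsum : ∀ x, ∑ c, u x c = 1) (hne : u true i0 ≠ u false i0) (x' x : Bool) :
    ∑ c, u x' c * dvec u i0 x c = if x' = x then 1 else 0 := by
  have hkey : ∑ c, u x' c * dvec u i0 x c
      = (u x' i0 - u (!x) i0) / (u x i0 - u (!x) i0) := by
    unfold dvec
    have hmd : ∀ c : Fin d, u x' c * (((if c = i0 then (1:ℝ) else 0) - u (!x) i0) / (u x i0 - u (!x) i0))
        = (u x' c * ((if c = i0 then (1:ℝ) else 0) - u (!x) i0)) / (u x i0 - u (!x) i0) := by
      intro c; ring
    rw [Finset.sum_congr rfl fun c _ => hmd c, ← Finset.sum_div]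
    congr 1
    have hterm : ∀ c : Fin d, u x' c * ((if c = i0 then (1:ℝ) else 0) - u (!x) i0)
        = (if c = i0 then u x' c else 0) - u x' c * u (!x) i0 := by
      intro c
      by_cases hc : c = i0 <;> simp [hc] <;> ring
    rw [Finset.sum_congr rfl fun c _ => hterm c, Finset.sum_sub_distrib, ← Finset.sum_mul,
      hsum]
    simp
  rw [hkey]
  cases x <;> cases x' <;> simp only [Bool.not_false, Bool.not_true]
  · simpa using div_self (sub_ne_zero.mpr (Ne.symm hne))
  · simp
  · simp
  · simpa using div_self (sub_ne_zero.mpr hne)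


private lemma filter_cond_eq (k : Fin K) (t : Fin K → Bool) :
    univ.filter (fun α : Fin K → Bool => ∀ l, l ≠ k → α l = t l)
      = {Function.update t k true, Function.update t k false} := by
  ext α
  simp only [Finset.mem_filter, Finset.mem_univ, true_and, Finset.mem_insert,
    Finset.mem_singleton]
  constructor
  · intro hα
    have hform : α = Function.update t k (α k) := by
      funext l
      by_cases hl : l = k
      · subst hl; simp
      · simp [Function.update_of_ne hl, hα l hl]
    cases hαk : α k
    · right; rw [hform, hαk]
    · left; rw [hform, hαk]
  · rintro (rfl | rfl) l hl <;> simp [Function.update_of_ne hl]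

private lemma update_ne_update (k : Fin K) (t : Fin K → Bool) :
    Function.update t k true ≠ Function.update t k false := by
  intro h
  have := congrFun h k
  simp at this

private lemma prod_ind (s : Fin p → Fin K) (k : Fin K) (j1 j2 : Fin p)
    (hsj1 : s j1 = k) (hsj2 : s j2 = k)
    (hjset : univ.filter (fun j => s j = k) = {j1, j2})
    (hchild : ∀ l, (univ.filter (fun j => s j = l)).card = 2)
    (α t : Fin K → Bool) :
    (∏ j ∈ (univ.erase j1).erase j2, if α (s j) = t (s j) then (1:ℝ) else 0)
      = if (∀ l, l ≠ k → α l = t l) then 1 else 0 := by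
  by_cases hcond : ∀ l, l ≠ k → α l = t l
  · rw [if_pos hcond]
    apply Finset.prod_eq_one
    intro j hj
    have hj' := Finset.mem_erase.mp hj
    have hj'' := Finset.mem_erase.mp hj'.2
    have hsjk : s j ≠ k := by
      intro hsj
      have hmem : j ∈ univ.filter (fun j => s j = k) := by
        simp [hsj]
      rw [hjset] at hmem
      simp only [Finset.mem_insert, Finset.mem_singleton] at hmem
      rcases hmem with h | h
      · exact hj''.1 h
      · exact hj'.1 h
    rw [if_pos (hcond _ hsjk)]
  · rw [if_neg hcond]
    push_neg at hcond
    obtain ⟨l, hlk, hlt⟩ := hcond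
    have hnempty : (univ.filter (fun j => s j = l)).Nonempty := by
      rw [← Finset.card_pos, hchild l]; norm_num
    obtain ⟨j0, hj0⟩ := hnempty
    have hsj0 : s j0 = l := (Finset.mem_filter.mp hj0).2
    have hj01 : j0 ≠ j1 := fun h => hlk (by rw [← hsj0, h, hsj1])
    have hj02 : j0 ≠ j2 := fun h => hlk (by rw [← hsj0, h, hsj2])
    refine Finset.prod_eq_zero (i := j0) ?_ ?_
    · exact Finset.mem_erase.mpr ⟨hj02, Finset.mem_erase.mpr ⟨hj01, Finset.mem_univ _⟩⟩
    · rw [hsj0, if_neg hlt]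

private lemma sum_fiber_ind (k : Fin K) (ν : (Fin K → Bool) → ℝ) (t : Fin K → Bool)
    (a : Bool) :
    ∑ α ∈ univ.filter (fun α : Fin K → Bool => α k = a),
        ν α * (if (∀ l, l ≠ k → α l = t l) then (1:ℝ) else 0) = ν (Function.update t k a) := by
  rw [Finset.sum_eq_single_of_mem (Function.update t k a)]
  · rw [if_pos, mul_one]
    intro l hl
    exact Function.update_of_ne hl a t
  · exact Finset.mem_filter.mpr ⟨Finset.mem_univ _, Function.update_self k a t⟩
  · intro β hβ hβne
    rw [if_neg, mul_zero]
    intro hcond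
    apply hβne
    have hβk : β k = a := (Finset.mem_filter.mp hβ).2
    funext l
    by_cases hl : l = k
    · subst hl; rw [hβk, Function.update_self]
    · rw [hcond l hl, Function.update_of_ne hl]

private def margK (k : Fin K) (ν : (Fin K → Bool) → ℝ) (aa : Bool) : ℝ :=
  ∑ α ∈ univ.filter (fun α : Fin K → Bool => α k = aa), ν α

private lemma margK_eq_sum_ite (k : Fin K) (ν : (Fin K → Bool) → ℝ) (aa : Bool) :
    margK k ν aa = ∑ β : Fin K → Bool, if β k = aa then ν β else 0 :=
  Finset.sum_filter _ _

private lemma margK_pos (k : Fin K) (ν : (Fin K → Bool) → ℝ) (hpos : ∀ α, 0 < ν α)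
    (aa : Bool) : 0 < margK k ν aa := by
  refine Finset.sum_pos (fun α _ => hpos α) ⟨fun _ => aa, ?_⟩
  simp

private lemma margK_sum (k : Fin K) (ν : (Fin K → Bool) → ℝ)
    (hsum : ∑ α : Fin K → Bool, ν α = 1) :
    margK k ν true + margK k ν false = 1 := by
  have := Finset.sum_fiberwise univ (fun α : Fin K → Bool => α k) ν
  rw [Fintype.sum_bool] at this
  rw [margK, margK]
  rw [this, hsum]

private def margRest (k : Fin K) (ν : (Fin K → Bool) → ℝ) (α : Fin K → Bool) : ℝ :=
  ∑ β : Fin K → Bool, if (∀ i, i ≠ k → β i = α i) then ν β else 0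

private lemma margRest_eq (k : Fin K) (ν : (Fin K → Bool) → ℝ) (α : Fin K → Bool) :
    margRest k ν α = ν (Function.update α k true) + ν (Function.update α k false) := by
  rw [margRest, ← Finset.sum_filter, filter_cond_eq k α,
    Finset.sum_pair (update_ne_update k α)]

private lemma margRest_update (k : Fin K) (ν : (Fin K → Bool) → ℝ) (α : Fin K → Bool)
    (aa : Bool) : margRest k ν (Function.update α k aa) = margRest k ν α := by
  unfold margRest
  refine Finset.sum_congr rfl fun β _ => ?_
  congr 1
  simp only [eq_iff_iff]
  constructor <;> intro h i hik <;> have h' := h i hik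
  · rwa [Function.update_of_ne hik] at h'
  · rwa [Function.update_of_ne hik]


private lemma la_indep {d : ℕ} (i0 : Fin d) (a b cc e : Fin d → ℝ)
    (hsa : ∑ c, a c = 1) (hsb : ∑ c, b c = 1) (hscc : ∑ c, cc c = 1) (hse : ∑ c, e c = 1)
    (hne : a i0 ≠ b i0) (x y : ℝ)
    (h : ∀ c1 c2, x * (a c1 * cc c2) + y * (b c1 * e c2) = 0) : x = 0 ∧ y = 0 := by
  have h1 : ∀ c1, x * a c1 + y * b c1 = 0 := by
    intro c1
    have hz : ∑ c2, (x * (a c1 * cc c2) + y * (b c1 * e c2)) = 0 := by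
      simp [h c1]
    calc x * a c1 + y * b c1
        = x * a c1 * (∑ c2, cc c2) + y * b c1 * (∑ c2, e c2) := by rw [hscc, hse]; ring
      _ = ∑ c2, (x * (a c1 * cc c2) + y * (b c1 * e c2)) := by
          rw [Finset.mul_sum, Finset.mul_sum, ← Finset.sum_add_distrib]
          exact Finset.sum_congr rfl fun c2 _ => by ring
      _ = 0 := hz
  have hxy : x + y = 0 := by
    have hz : ∑ c1, (x * a c1 + y * b c1) = 0 := by simp [h1]
    rw [Finset.sum_add_distrib, ← Finset.mul_sum, ← Finset.mul_sum, hsa, hsb] at hz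
    simpa using hz
  have hx : x * (a i0 - b i0) = 0 := by
    have h2 := h1 i0
    have hy : y = -x := by linarith
    rw [hy] at h2
    nlinarith [h2]
  rcases mul_eq_zero.mp hx with h0 | h0
  · exact ⟨h0, by linarith⟩
  · exact absurd (sub_eq_zero.mp h0) hne

private lemma exists_ne_zero_of_sum_one {d : ℕ} (b : Fin d → ℝ) (hsb : ∑ c, b c = 1) :
    ∃ c0, b c0 ≠ 0 := by
  by_contra hb
  push_neg at hb
  rw [Finset.sum_congr rfl fun c _ => hb c] at hsb
  simp at hsb

private lemma la_rank1 {d : ℕ} (i0 : Fin d) (a b cc e a' cc' : Fin d → ℝ)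
    (hsa : ∑ c, a c = 1) (hsb : ∑ c, b c = 1) (hscc : ∑ c, cc c = 1) (hse : ∑ c, e c = 1)
    (hsa' : ∑ c, a' c = 1) (hscc' : ∑ c, cc' c = 1)
    (hab : a i0 ≠ b i0) (hcce : cc i0 ≠ e i0) (x y : ℝ)
    (h : ∀ c1 c2, a' c1 * cc' c2 = x * (a c1 * cc c2) + y * (b c1 * e c2)) :
    (a' = a ∧ cc' = cc) ∨ (a' = b ∧ cc' = e) := by
  -- dual functionals on the second coordinate
  set g : Fin d → ℝ := fun c => ((if c = i0 then 1 else 0) - e i0) / (cc i0 - e i0) with hg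
  set g' : Fin d → ℝ := fun c => ((if c = i0 then 1 else 0) - cc i0) / (e i0 - cc i0) with hg'
  have hpair : ∀ (v : Fin d → ℝ) (κ : ℝ), (∑ c, v c = 1) →
      ∑ c, v c * (((if c = i0 then (1:ℝ) else 0) - κ) / (cc i0 - e i0))
        = (v i0 - κ) / (cc i0 - e i0) := by
    intro v κ hv
    have hmd : ∀ c : Fin d, v c * (((if c = i0 then (1:ℝ) else 0) - κ) / (cc i0 - e i0))
        = (v c * ((if c = i0 then (1:ℝ) else 0) - κ)) / (cc i0 - e i0) := fun c => by ring
    rw [Finset.sum_congr rfl fun c _ => hmd c, ← Finset.sum_div]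
    congr 1
    have hterm : ∀ c : Fin d, v c * ((if c = i0 then (1:ℝ) else 0) - κ)
        = (if c = i0 then v c else 0) - v c * κ := by
      intro c; by_cases hc : c = i0 <;> simp [hc] <;> ring
    rw [Finset.sum_congr rfl fun c _ => hterm c, Finset.sum_sub_distrib, ← Finset.sum_mul, hv]
    simp
  have hpair' : ∀ (v : Fin d → ℝ) (κ : ℝ), (∑ c, v c = 1) →
      ∑ c, v c * (((if c = i0 then (1:ℝ) else 0) - κ) / (e i0 - cc i0))
        = (v i0 - κ) / (e i0 - cc i0) := by
    intro v κ hv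
    have hmd : ∀ c : Fin d, v c * (((if c = i0 then (1:ℝ) else 0) - κ) / (e i0 - cc i0))
        = (v c * ((if c = i0 then (1:ℝ) else 0) - κ)) / (e i0 - cc i0) := fun c => by ring
    rw [Finset.sum_congr rfl fun c _ => hmd c, ← Finset.sum_div]
    congr 1
    have hterm : ∀ c : Fin d, v c * ((if c = i0 then (1:ℝ) else 0) - κ)
        = (if c = i0 then v c else 0) - v c * κ := by
      intro c; by_cases hc : c = i0 <;> simp [hc] <;> ring
    rw [Finset.sum_congr rfl fun c _ => hterm c, Finset.sum_sub_distrib, ← Finset.sum_mul, hv]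
    simp
  have hd0 : cc i0 - e i0 ≠ 0 := sub_ne_zero.mpr hcce
  have hd0' : e i0 - cc i0 ≠ 0 := sub_ne_zero.mpr (Ne.symm hcce)
  have hgcc : ∑ c, cc c * g c = 1 := by
    rw [hg, hpair cc (e i0) hscc]; exact div_self hd0
  have hge : ∑ c, e c * g c = 0 := by
    rw [hg, hpair e (e i0) hse]; simp
  have hg'cc : ∑ c, cc c * g' c = 0 := by
    rw [hg', hpair' cc (cc i0) hscc]; simp
  have hg'e : ∑ c, e c * g' c = 1 := by
    rw [hg', hpair' e (cc i0) hse]; exact div_self hd0'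
  -- contract h against g and g'
  have key1 : ∀ c1, a' c1 * (∑ c2, cc' c2 * g c2) = x * a c1 := by
    intro c1
    rw [Finset.mul_sum]
    calc ∑ c2, a' c1 * (cc' c2 * g c2) = ∑ c2, (a' c1 * cc' c2) * g c2 := by
          exact Finset.sum_congr rfl fun c2 _ => by ring
      _ = ∑ c2, (x * (a c1 * cc c2) + y * (b c1 * e c2)) * g c2 := by
          exact Finset.sum_congr rfl fun c2 _ => by rw [h]
      _ = x * a c1 * (∑ c2, cc c2 * g c2) + y * b c1 * (∑ c2, e c2 * g c2) := by
          rw [Finset.mul_sum, Finset.mul_sum, ← Finset.sum_add_distrib]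
          exact Finset.sum_congr rfl fun c2 _ => by ring
      _ = x * a c1 := by rw [hgcc, hge]; ring
  have key2 : ∀ c1, a' c1 * (∑ c2, cc' c2 * g' c2) = y * b c1 := by
    intro c1
    rw [Finset.mul_sum]
    calc ∑ c2, a' c1 * (cc' c2 * g' c2) = ∑ c2, (a' c1 * cc' c2) * g' c2 := by
          exact Finset.sum_congr rfl fun c2 _ => by ring
      _ = ∑ c2, (x * (a c1 * cc c2) + y * (b c1 * e c2)) * g' c2 := by
          exact Finset.sum_congr rfl fun c2 _ => by rw [h]
      _ = x * a c1 * (∑ c2, cc c2 * g' c2) + y * b c1 * (∑ c2, e c2 * g' c2) := by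
          rw [Finset.mul_sum, Finset.mul_sum, ← Finset.sum_add_distrib]
          exact Finset.sum_congr rfl fun c2 _ => by ring
      _ = y * b c1 := by rw [hg'cc, hg'e]; ring
  -- U = x and V = y
  have hU : (∑ c2, cc' c2 * g c2) = x := by
    have hs := congrArg (fun r => r) (rfl :  (0:ℝ) = 0)
    have h1 : ∑ c1, a' c1 * (∑ c2, cc' c2 * g c2) = ∑ c1, x * a c1 :=
      Finset.sum_congr rfl fun c1 _ => key1 c1
    rw [← Finset.sum_mul, hsa', ← Finset.mul_sum, hsa] at h1
    simpa using h1
  have hV : (∑ c2, cc' c2 * g' c2) = y := by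
    have h1 : ∑ c1, a' c1 * (∑ c2, cc' c2 * g' c2) = ∑ c1, y * b c1 :=
      Finset.sum_congr rfl fun c1 _ => key2 c1
    rw [← Finset.sum_mul, hsa', ← Finset.mul_sum, hsb] at h1
    simpa using h1
  have key1' : ∀ c1, a' c1 * x = x * a c1 := fun c1 => by
    have h' := key1 c1; rw [hU] at h'; exact h'
  have key2' : ∀ c1, a' c1 * y = y * b c1 := fun c1 => by
    have h' := key2 c1; rw [hV] at h'; exact h'
  -- double sum: 1 = x + y
  have hxy : x + y = 1 := by
    have hds : ∑ c1, ∑ c2, a' c1 * cc' c2 = ∑ c1, ∑ c2, (x * (a c1 * cc c2) + y * (b c1 * e c2)) :=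
      Finset.sum_congr rfl fun c1 _ => Finset.sum_congr rfl fun c2 _ => h c1 c2
    have hL : ∑ c1, ∑ c2, a' c1 * cc' c2 = 1 := by
      rw [← Finset.sum_mul_sum, hsa', hscc']; norm_num
    have hR : ∑ c1, ∑ c2, (x * (a c1 * cc c2) + y * (b c1 * e c2)) = x + y := by
      have : ∀ c1, ∑ c2, (x * (a c1 * cc c2) + y * (b c1 * e c2))
          = x * a c1 + y * b c1 := by
        intro c1
        calc ∑ c2, (x * (a c1 * cc c2) + y * (b c1 * e c2))
            = x * a c1 * (∑ c2, cc c2) + y * b c1 * (∑ c2, e c2) := by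
              rw [Finset.mul_sum, Finset.mul_sum, ← Finset.sum_add_distrib]
              exact Finset.sum_congr rfl fun c2 _ => by ring
          _ = x * a c1 + y * b c1 := by rw [hscc, hse]; ring
      rw [Finset.sum_congr rfl fun c1 _ => this c1, Finset.sum_add_distrib,
        ← Finset.mul_sum, ← Finset.mul_sum, hsa, hsb]
      ring
    rw [hL, hR] at hds
    exact hds.symm
  by_cases hx0 : x = 0
  · -- right case
    have hy1 : y = 1 := by linarith
    right
    have ha'b : a' = b := by
      funext c1
      have := key2' c1
      rw [hy1] at this
      linarith
    refine ⟨ha'b, ?_⟩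
    obtain ⟨c0, hc0⟩ := exists_ne_zero_of_sum_one b hsb
    funext c2
    have hc := h c0 c2
    rw [hx0, congrFun ha'b c0] at hc
    have : b c0 * cc' c2 = b c0 * e c2 := by rw [hy1] at hc; linarith
    exact mul_left_cancel₀ hc0 this
  · -- a' = a
    have ha'a : a' = a := by
      funext c1
      have h' := key1' c1
      have h2 : a' c1 * x = a c1 * x := by linarith
      exact mul_right_cancel₀ hx0 h2
    by_cases hy0 : y = 0
    · have hx1 : x = 1 := by linarith
      left
      refine ⟨ha'a, ?_⟩
      obtain ⟨c0, hc0⟩ := exists_ne_zero_of_sum_one a hsa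
      funext c2
      have hc := h c0 c2
      rw [hy0, congrFun ha'a c0, hx1] at hc
      have : a c0 * cc' c2 = a c0 * cc c2 := by linarith
      exact mul_left_cancel₀ hc0 this
    · exfalso
      have ha'b : a' = b := by
        funext c1
        have h' := key2' c1
        have h2 : a' c1 * y = b c1 * y := by linarith
        exact mul_right_cancel₀ hy0 h2
      apply hab
      rw [← congrFun ha'a i0, congrFun ha'b i0]

private lemma pmf_split (s : Fin p → Fin K) (k : Fin K) {j1 j2 : Fin p} (hne : j1 ≠ j2)
    (h1 : s j1 = k) (h2 : s j2 = k) (θ : Fin p → Fin d → Bool → ℝ)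
    (ν : (Fin K → Bool) → ℝ) (c : Fin p → Fin d) :
    blessPMF s θ ν c = ∑ aa : Bool, θ j1 (c j1) aa * θ j2 (c j2) aa *
      ∑ α ∈ univ.filter (fun α : Fin K → Bool => α k = aa),
        ν α * ∏ j ∈ (univ.erase j1).erase j2, θ j (c j) (α (s j)) := by
  unfold blessPMF
  exact sum_split s k hne h1 h2 ν (fun j aa => θ j (c j) aa)

private lemma slice_reduce (s : Fin p → Fin K) (k : Fin K) {j1 j2 : Fin p} (hne12 : j1 ≠ j2)
    (h1 : s j1 = k) (h2 : s j2 = k) (θ : Fin p → Fin d → Bool → ℝ)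
    (ν : (Fin K → Bool) → ℝ) (g : Fin p → Fin d → ℝ) (c1 c2 : Fin d)
    (h : Fin p → Fin d → ℝ)
    (hh1 : ∀ v, h j1 v = if v = c1 then 1 else 0)
    (hh2 : ∀ v, h j2 v = if v = c2 then 1 else 0)
    (hhg : ∀ j, j ≠ j1 → j ≠ j2 → h j = g j) :
    ∑ c : Fin p → Fin d, blessPMF s θ ν c * ∏ j, h j (c j)
      = ∑ aa : Bool, θ j1 c1 aa * θ j2 c2 aa *
          ∑ α ∈ univ.filter (fun α : Fin K → Bool => α k = aa),
            ν α * ∏ j ∈ (univ.erase j1).erase j2, ∑ x, θ j x (α (s j)) * g j x := by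
  calc ∑ c : Fin p → Fin d, blessPMF s θ ν c * ∏ j, h j (c j)
      = ∑ α : Fin K → Bool, ν α * ∏ j, ∑ x, θ j x (α (s j)) * h j x :=
        bless_moment s θ ν h
    _ = ∑ aa : Bool, (∑ x, θ j1 x aa * h j1 x) * (∑ x, θ j2 x aa * h j2 x) *
          ∑ α ∈ univ.filter (fun α : Fin K → Bool => α k = aa),
            ν α * ∏ j ∈ (univ.erase j1).erase j2, ∑ x, θ j x (α (s j)) * h j x :=
        sum_split s k hne12 h1 h2 ν (fun j aa => ∑ x, θ j x aa * h j x)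
    _ = _ := by
        refine Finset.sum_congr rfl fun aa _ => ?_
        have hF1 : (∑ x, θ j1 x aa * h j1 x) = θ j1 c1 aa := by
          simp [hh1, mul_ite]
        have hF2 : (∑ x, θ j2 x aa * h j2 x) = θ j2 c2 aa := by
          simp [hh2, mul_ite]
        rw [hF1, hF2]
        congr 1
        refine Finset.sum_congr rfl fun α _ => ?_
        congr 1
        refine Finset.prod_congr rfl fun j hj => ?_
        have hj' := Finset.mem_erase.mp hj
        have hj'' := Finset.mem_erase.mp hj'.2
        rw [hhg j hj''.1 hj'.1]

end BlessAux

set_option maxHeartbeats 2000000 in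
theorem bless_child_tables_identifiable_iff_dependent {K p d : ℕ} (hd : 2 ≤ d)
    (s : Fin p → Fin K) (θ : Fin p → Fin d → Bool → ℝ) (ν : (Fin K → Bool) → ℝ)
    (hval : BlessValid θ ν)
    (hchild : ∀ k, (Finset.univ.filter (fun j => s j = k)).card = 2)
    (k : Fin K) :
    (¬ indepAt k ν
      ↔ (∀ (θ' : Fin p → Fin d → Bool → ℝ) (ν' : (Fin K → Bool) → ℝ),
          BlessValid θ' ν' → (∀ c, blessPMF s θ' ν' c = blessPMF s θ ν c) →
          ∀ j, s j = k → ∀ c x, θ' j c x = θ j c x)) := by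
  classical
  have hd1 : 0 < d := by omega
  set i0 : Fin d := ⟨0, hd1⟩ with hi0def
  have hi0d : (i0 : ℕ) + 1 < d := by show 0 + 1 < d; omega
  obtain ⟨j1, j2, hne12, hjset⟩ := Finset.card_eq_two.mp (hchild k)
  have hsj1 : s j1 = k := by
    have hmem : j1 ∈ univ.filter (fun j => s j = k) := by rw [hjset]; simp
    exact (Finset.mem_filter.mp hmem).2
  have hsj2 : s j2 = k := by
    have hmem : j2 ∈ univ.filter (fun j => s j = k) := by rw [hjset]; simp
    exact (Finset.mem_filter.mp hmem).2
  have hEk : ∀ j ∈ (univ.erase j1).erase j2, s j ≠ k := by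
    intro j hj hsjk
    have hj' := Finset.mem_erase.mp hj
    have hj'' := Finset.mem_erase.mp hj'.2
    have hmem : j ∈ univ.filter (fun j => s j = k) := by simp [hsjk]
    rw [hjset] at hmem
    simp only [Finset.mem_insert, Finset.mem_singleton] at hmem
    rcases hmem with h | h
    · exact hj''.1 h
    · exact hj'.1 h
  constructor
  · intro hdep θ' ν' hval' hpmf
    have hsa := hval.theta_sum j1 true
    have hsb := hval.theta_sum j1 false
    have hscc := hval.theta_sum j2 true
    have hse := hval.theta_sum j2 false
    have hsa' := hval'.theta_sum j1 true
    have hsb' := hval'.theta_sum j1 false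
    have hscc' := hval'.theta_sum j2 true
    have hse' := hval'.theta_sum j2 false
    have hab : θ j1 i0 false < θ j1 i0 true := hval.theta_mono j1 i0 hi0d
    have hcce : θ j2 i0 false < θ j2 i0 true := hval.theta_mono j2 i0 hi0d
    have hab' : θ' j1 i0 false < θ' j1 i0 true := hval'.theta_mono j1 i0 hi0d
    -- the marginal identity on the pair (j1, j2)
    have hP : ∀ c1 c2 : Fin d,
        margK k ν true * (θ j1 c1 true * θ j2 c2 true)
          + margK k ν false * (θ j1 c1 false * θ j2 c2 false)
        = margK k ν' true * (θ' j1 c1 true * θ' j2 c2 true)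
          + margK k ν' false * (θ' j1 c1 false * θ' j2 c2 false) := by
      intro c1 c2
      have e1 := slice_reduce s k hne12 hsj1 hsj2 θ ν (fun _ _ => (1:ℝ)) c1 c2
        (fun j v => if j = j1 then (if v = c1 then 1 else 0)
          else if j = j2 then (if v = c2 then 1 else 0) else 1)
        (fun v => by simp) (fun v => by simp [Ne.symm hne12])
        (fun j hj1 hj2 => by simp [hj1, hj2])
      have e2 := slice_reduce s k hne12 hsj1 hsj2 θ' ν' (fun _ _ => (1:ℝ)) c1 c2
        (fun j v => if j = j1 then (if v = c1 then 1 else 0)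
          else if j = j2 then (if v = c2 then 1 else 0) else 1)
        (fun v => by simp) (fun v => by simp [Ne.symm hne12])
        (fun j hj1 hj2 => by simp [hj1, hj2])
      have e0 : ∑ c : Fin p → Fin d, blessPMF s θ' ν' c *
            ∏ j, (if j = j1 then (if c j = c1 then (1:ℝ) else 0)
              else if j = j2 then (if c j = c2 then 1 else 0) else 1)
          = ∑ c : Fin p → Fin d, blessPMF s θ ν c *
            ∏ j, (if j = j1 then (if c j = c1 then (1:ℝ) else 0)
              else if j = j2 then (if c j = c2 then 1 else 0) else 1) :=
        Finset.sum_congr rfl fun c _ => by rw [hpmf c]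
      have echain := (e2.symm.trans e0).trans e1
      beta_reduce at echain
      simp only [mul_one, hval.theta_sum, hval'.theta_sum, Finset.prod_const_one,
        Fintype.sum_bool] at echain
      simp only [margK]
      linear_combination -echain
    -- the fine slice identities
    have hN : ∀ (t : Fin K → Bool) (c1 c2 : Fin d),
        ν (Function.update t k true) * (θ j1 c1 true * θ j2 c2 true)
          + ν (Function.update t k false) * (θ j1 c1 false * θ j2 c2 false)
        = (∑ α ∈ univ.filter (fun α : Fin K → Bool => α k = true),
              ν' α * ∏ j ∈ (univ.erase j1).erase j2,
                ∑ x, θ' j x (α (s j)) * dvec (fun bb v => θ j v bb) i0 (t (s j)) x)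
            * (θ' j1 c1 true * θ' j2 c2 true)
          + (∑ α ∈ univ.filter (fun α : Fin K → Bool => α k = false),
              ν' α * ∏ j ∈ (univ.erase j1).erase j2,
                ∑ x, θ' j x (α (s j)) * dvec (fun bb v => θ j v bb) i0 (t (s j)) x)
            * (θ' j1 c1 false * θ' j2 c2 false) := by
      intro t c1 c2
      have e1 := slice_reduce s k hne12 hsj1 hsj2 θ ν
        (fun j => dvec (fun bb v => θ j v bb) i0 (t (s j))) c1 c2
        (fun j v => if j = j1 then (if v = c1 then 1 else 0)
          else if j = j2 then (if v = c2 then 1 else 0)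
          else dvec (fun bb v => θ j v bb) i0 (t (s j)) v)
        (fun v => by simp) (fun v => by simp [Ne.symm hne12])
        (fun j hj1 hj2 => by simp [hj1, hj2])
      have e2 := slice_reduce s k hne12 hsj1 hsj2 θ' ν'
        (fun j => dvec (fun bb v => θ j v bb) i0 (t (s j))) c1 c2
        (fun j v => if j = j1 then (if v = c1 then 1 else 0)
          else if j = j2 then (if v = c2 then 1 else 0)
          else dvec (fun bb v => θ j v bb) i0 (t (s j)) v)
        (fun v => by simp) (fun v => by simp [Ne.symm hne12])
        (fun j hj1 hj2 => by simp [hj1, hj2])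
      have e0 : ∑ c : Fin p → Fin d, blessPMF s θ' ν' c *
            ∏ j, (if j = j1 then (if c j = c1 then (1:ℝ) else 0)
              else if j = j2 then (if c j = c2 then 1 else 0)
              else dvec (fun bb v => θ j v bb) i0 (t (s j)) (c j))
          = ∑ c : Fin p → Fin d, blessPMF s θ ν c *
            ∏ j, (if j = j1 then (if c j = c1 then (1:ℝ) else 0)
              else if j = j2 then (if c j = c2 then 1 else 0)
              else dvec (fun bb v => θ j v bb) i0 (t (s j)) (c j)) :=
        Finset.sum_congr rfl fun c _ => by rw [hpmf c]
      have echain := (e2.symm.trans e0).trans e1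
      beta_reduce at echain
      have hredU : ∀ aa : Bool, (∑ α ∈ univ.filter (fun α : Fin K → Bool => α k = aa),
          ν α * ∏ j ∈ (univ.erase j1).erase j2,
            ∑ x, θ j x (α (s j)) * dvec (fun bb v => θ j v bb) i0 (t (s j)) x)
          = ν (Function.update t k aa) := by
        intro aa
        rw [← sum_fiber_ind k ν t aa]
        refine Finset.sum_congr rfl fun α _ => ?_
        congr 1
        rw [← prod_ind s k j1 j2 hsj1 hsj2 hjset hchild α t]
        refine Finset.prod_congr rfl fun j hj => ?_
        exact dvec_dual (fun bb v => θ j v bb) i0 (fun bb => hval.theta_sum j bb)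
          ((hval.theta_mono j i0 hi0d).ne') (α (s j)) (t (s j))
      rw [Fintype.sum_bool, Fintype.sum_bool, hredU true, hredU false] at echain
      linear_combination -echain
    -- linear algebra phase
    by_cases hmem :
      ((fun c1 c2 => θ' j1 c1 true * θ' j2 c2 true) ∈
          Submodule.span ℝ {(fun c1 c2 => θ j1 c1 true * θ j2 c2 true),
            (fun c1 c2 => θ j1 c1 false * θ j2 c2 false)})
        ∧ ((fun c1 c2 => θ' j1 c1 false * θ' j2 c2 false) ∈
          Submodule.span ℝ {(fun c1 c2 => θ j1 c1 true * θ j2 c2 true),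
            (fun c1 c2 => θ j1 c1 false * θ j2 c2 false)})
    · obtain ⟨x1, y1, hxy1⟩ := Submodule.mem_span_pair.mp hmem.1
      obtain ⟨x2, y2, hxy2⟩ := Submodule.mem_span_pair.mp hmem.2
      have hpt1 : ∀ c1 c2, θ' j1 c1 true * θ' j2 c2 true
          = x1 * (θ j1 c1 true * θ j2 c2 true) + y1 * (θ j1 c1 false * θ j2 c2 false) := by
        intro c1 c2
        have h0 := congrFun (congrFun hxy1 c1) c2
        simpa using h0.symm
      have hpt2 : ∀ c1 c2, θ' j1 c1 false * θ' j2 c2 false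
          = x2 * (θ j1 c1 true * θ j2 c2 true) + y2 * (θ j1 c1 false * θ j2 c2 false) := by
        intro c1 c2
        have h0 := congrFun (congrFun hxy2 c1) c2
        simpa using h0.symm
      have r1 := la_rank1 i0 (fun c => θ j1 c true) (fun c => θ j1 c false)
        (fun c => θ j2 c true) (fun c => θ j2 c false)
        (fun c => θ' j1 c true) (fun c => θ' j2 c true)
        hsa hsb hscc hse hsa' hscc' hab.ne' hcce.ne' x1 y1 hpt1
      have r2 := la_rank1 i0 (fun c => θ j1 c true) (fun c => θ j1 c false)
        (fun c => θ j2 c true) (fun c => θ j2 c false)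
        (fun c => θ' j1 c false) (fun c => θ' j2 c false)
        hsa hsb hscc hse hsb' hse' hab.ne' hcce.ne' x2 y2 hpt2
      rcases r1 with ⟨hA1, hC1⟩ | ⟨hA1, hC1⟩ <;> rcases r2 with ⟨hB1, hE1⟩ | ⟨hB1, hE1⟩
      · exfalso
        have h1 := congrFun hA1 i0
        have h2 := congrFun hB1 i0
        linarith
      · intro j hj c x
        have hjmem : j ∈ ({j1, j2} : Finset (Fin p)) := by
          rw [← hjset]; simp [hj]
        rcases Finset.mem_insert.mp hjmem with rfl | hjm
        · cases x
          · exact congrFun hB1 c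
          · exact congrFun hA1 c
        · rw [Finset.mem_singleton] at hjm; subst hjm
          cases x
          · exact congrFun hE1 c
          · exact congrFun hC1 c
      · exfalso
        have h1 := congrFun hA1 i0
        have h2 := congrFun hB1 i0
        linarith
      · exfalso
        have h1 := congrFun hA1 i0
        have h2 := congrFun hB1 i0
        linarith
    · exfalso
      apply hdep
      rw [not_and_or] at hmem
      have hsep : ∃ φ : Module.Dual ℝ (Fin d → Fin d → ℝ),
          φ (fun c1 c2 => θ j1 c1 true * θ j2 c2 true) = 0 ∧
          φ (fun c1 c2 => θ j1 c1 false * θ j2 c2 false) = 0 ∧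
          (φ (fun c1 c2 => θ' j1 c1 true * θ' j2 c2 true) ≠ 0 ∨
           φ (fun c1 c2 => θ' j1 c1 false * θ' j2 c2 false) ≠ 0) := by
        rcases hmem with h | h
        · obtain ⟨f, hf1, hf2⟩ := Submodule.exists_dual_map_eq_bot_of_notMem h inferInstance
          have hker : ∀ v ∈ Submodule.span ℝ {(fun c1 c2 => θ j1 c1 true * θ j2 c2 true),
              (fun c1 c2 => θ j1 c1 false * θ j2 c2 false)}, f v = 0 := by
            intro v hv
            have hm : f v ∈ Submodule.map f (Submodule.span ℝ _) :=
              Submodule.mem_map_of_mem hv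
            rw [hf2] at hm
            simpa using hm
          exact ⟨f, hker _ (Submodule.subset_span (Set.mem_insert _ _)),
            hker _ (Submodule.subset_span (Set.mem_insert_of_mem _ rfl)), Or.inl hf1⟩
        · obtain ⟨f, hf1, hf2⟩ := Submodule.exists_dual_map_eq_bot_of_notMem h inferInstance
          have hker : ∀ v ∈ Submodule.span ℝ {(fun c1 c2 => θ j1 c1 true * θ j2 c2 true),
              (fun c1 c2 => θ j1 c1 false * θ j2 c2 false)}, f v = 0 := by
            intro v hv
            have hm : f v ∈ Submodule.map f (Submodule.span ℝ _) :=
              Submodule.mem_map_of_mem hv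
            rw [hf2] at hm
            simpa using hm
          exact ⟨f, hker _ (Submodule.subset_span (Set.mem_insert _ _)),
            hker _ (Submodule.subset_span (Set.mem_insert_of_mem _ rfl)), Or.inr hf1⟩
      obtain ⟨φ, hφA, hφB, hφor⟩ := hsep
      have hπ'1 : 0 < margK k ν' true := margK_pos k ν' hval'.nu_pos true
      have hπ'0 : 0 < margK k ν' false := margK_pos k ν' hval'.nu_pos false
      -- function-level identities and their images under φ
      have hPfun : margK k ν true • (fun c1 c2 => θ j1 c1 true * θ j2 c2 true)
            + margK k ν false • (fun c1 c2 => θ j1 c1 false * θ j2 c2 false)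
          = margK k ν' true • (fun c1 c2 => θ' j1 c1 true * θ' j2 c2 true)
            + margK k ν' false • (fun c1 c2 => θ' j1 c1 false * θ' j2 c2 false) := by
        funext c1 c2
        have h0 := hP c1 c2
        simpa using h0
      have hPφ : 0 = margK k ν' true * φ (fun c1 c2 => θ' j1 c1 true * θ' j2 c2 true)
          + margK k ν' false * φ (fun c1 c2 => θ' j1 c1 false * θ' j2 c2 false) := by
        have h0 := congrArg φ hPfun
        rw [map_add, map_add, map_smul, map_smul, map_smul, map_smul, hφA, hφB] at h0
        simpa using h0
      have hNfun : ∀ t : Fin K → Bool,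
          ν (Function.update t k true) • (fun c1 c2 => θ j1 c1 true * θ j2 c2 true)
            + ν (Function.update t k false) • (fun c1 c2 => θ j1 c1 false * θ j2 c2 false)
          = (∑ α ∈ univ.filter (fun α : Fin K → Bool => α k = true),
                ν' α * ∏ j ∈ (univ.erase j1).erase j2,
                  ∑ x, θ' j x (α (s j)) * dvec (fun bb v => θ j v bb) i0 (t (s j)) x)
              • (fun c1 c2 => θ' j1 c1 true * θ' j2 c2 true)
            + (∑ α ∈ univ.filter (fun α : Fin K → Bool => α k = false),
                ν' α * ∏ j ∈ (univ.erase j1).erase j2,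
                  ∑ x, θ' j x (α (s j)) * dvec (fun bb v => θ j v bb) i0 (t (s j)) x)
              • (fun c1 c2 => θ' j1 c1 false * θ' j2 c2 false) := by
        intro t
        funext c1 c2
        have h0 := hN t c1 c2
        simpa using h0
      have hNφ : ∀ t : Fin K → Bool,
          0 = (∑ α ∈ univ.filter (fun α : Fin K → Bool => α k = true),
                ν' α * ∏ j ∈ (univ.erase j1).erase j2,
                  ∑ x, θ' j x (α (s j)) * dvec (fun bb v => θ j v bb) i0 (t (s j)) x)
              * φ (fun c1 c2 => θ' j1 c1 true * θ' j2 c2 true)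
            + (∑ α ∈ univ.filter (fun α : Fin K → Bool => α k = false),
                ν' α * ∏ j ∈ (univ.erase j1).erase j2,
                  ∑ x, θ' j x (α (s j)) * dvec (fun bb v => θ j v bb) i0 (t (s j)) x)
              * φ (fun c1 c2 => θ' j1 c1 false * θ' j2 c2 false) := by
        intro t
        have h0 := congrArg φ (hNfun t)
        rw [map_add, map_add, map_smul, map_smul, map_smul, map_smul, hφA, hφB] at h0
        simpa using h0
      have hqne : φ (fun c1 c2 => θ' j1 c1 true * θ' j2 c2 true) ≠ 0 := by
        rcases hφor with h | h
        · exact h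
        · intro h0
          rw [h0, mul_zero, zero_add] at hPφ
          exact h (by
            rcases mul_eq_zero.mp hPφ.symm with h' | h'
            · exact absurd h' hπ'0.ne'
            · exact h')
      have hWrel : ∀ t : Fin K → Bool,
          (∑ α ∈ univ.filter (fun α : Fin K → Bool => α k = true),
              ν' α * ∏ j ∈ (univ.erase j1).erase j2,
                ∑ x, θ' j x (α (s j)) * dvec (fun bb v => θ j v bb) i0 (t (s j)) x)
            * margK k ν' false
          = (∑ α ∈ univ.filter (fun α : Fin K → Bool => α k = false),
              ν' α * ∏ j ∈ (univ.erase j1).erase j2,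
                ∑ x, θ' j x (α (s j)) * dvec (fun bb v => θ j v bb) i0 (t (s j)) x)
            * margK k ν' true := by
        intro t
        have h0 : φ (fun c1 c2 => θ' j1 c1 true * θ' j2 c2 true) *
            ((∑ α ∈ univ.filter (fun α : Fin K → Bool => α k = true),
              ν' α * ∏ j ∈ (univ.erase j1).erase j2,
                ∑ x, θ' j x (α (s j)) * dvec (fun bb v => θ j v bb) i0 (t (s j)) x)
              * margK k ν' false
            - (∑ α ∈ univ.filter (fun α : Fin K → Bool => α k = false),
              ν' α * ∏ j ∈ (univ.erase j1).erase j2,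
                ∑ x, θ' j x (α (s j)) * dvec (fun bb v => θ j v bb) i0 (t (s j)) x)
              * margK k ν' true) = 0 := by
          linear_combination (-(margK k ν' false)) * hNφ t
            + (∑ α ∈ univ.filter (fun α : Fin K → Bool => α k = false),
              ν' α * ∏ j ∈ (univ.erase j1).erase j2,
                ∑ x, θ' j x (α (s j)) * dvec (fun bb v => θ j v bb) i0 (t (s j)) x) * hPφ
        rcases mul_eq_zero.mp h0 with h' | h'
        · exact absurd h' hqne
        · linarith [sub_eq_zero.mp h']
      have hcoef : ∀ (t : Fin K → Bool) (aa : Bool),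
          margK k ν' true * ν (Function.update t k aa)
            = (∑ α ∈ univ.filter (fun α : Fin K → Bool => α k = true),
                ν' α * ∏ j ∈ (univ.erase j1).erase j2,
                  ∑ x, θ' j x (α (s j)) * dvec (fun bb v => θ j v bb) i0 (t (s j)) x)
              * margK k ν aa := by
        intro t aa
        have hla := la_indep i0 (fun c => θ j1 c true) (fun c => θ j1 c false)
          (fun c => θ j2 c true) (fun c => θ j2 c false) hsa hsb hscc hse hab.ne'
          (margK k ν' true * ν (Function.update t k true)
            - (∑ α ∈ univ.filter (fun α : Fin K → Bool => α k = true),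
                ν' α * ∏ j ∈ (univ.erase j1).erase j2,
                  ∑ x, θ' j x (α (s j)) * dvec (fun bb v => θ j v bb) i0 (t (s j)) x)
              * margK k ν true)
          (margK k ν' true * ν (Function.update t k false)
            - (∑ α ∈ univ.filter (fun α : Fin K → Bool => α k = true),
                ν' α * ∏ j ∈ (univ.erase j1).erase j2,
                  ∑ x, θ' j x (α (s j)) * dvec (fun bb v => θ j v bb) i0 (t (s j)) x)
              * margK k ν false)
          (fun c1 c2 => by
            linear_combination (margK k ν' true) * hN t c1 c2
              - (∑ α ∈ univ.filter (fun α : Fin K → Bool => α k = true),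
                  ν' α * ∏ j ∈ (univ.erase j1).erase j2,
                    ∑ x, θ' j x (α (s j)) * dvec (fun bb v => θ j v bb) i0 (t (s j)) x)
                * hP c1 c2
              - (θ' j1 c1 false * θ' j2 c2 false) * hWrel t)
        cases aa
        · have h0 := hla.2; linarith
        · have h0 := hla.1; linarith
      -- conclude independence
      intro α
      have h1 := hcoef α (α k)
      rw [Function.update_eq_self] at h1
      have h2 : margK k ν' true *
            (ν (Function.update α k true) + ν (Function.update α k false))
          = (∑ α' ∈ univ.filter (fun α' : Fin K → Bool => α' k = true),
                ν' α' * ∏ j ∈ (univ.erase j1).erase j2,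
                  ∑ x, θ' j x (α' (s j)) * dvec (fun bb v => θ j v bb) i0 (α (s j)) x)
              * (margK k ν true + margK k ν false) := by
        have ht := hcoef α true
        have hf := hcoef α false
        linarith
      rw [margK_sum k ν hval.nu_sum, mul_one, ← margRest_eq k ν α] at h2
      rw [← h2] at h1
      have hfinal : ν α = margK k ν (α k) * margRest k ν α :=
        mul_left_cancel₀ hπ'1.ne' (h1.trans (by ring))
      rw [margK_eq_sum_ite] at hfinal
      simpa only [margRest] using hfinal
  · intro hid hindep
    have hρpos : 0 < margK k ν true := margK_pos k ν hval.nu_pos true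
    have hρ0pos : 0 < margK k ν false := margK_pos k ν hval.nu_pos false
    have hρsum : margK k ν true + margK k ν false = 1 := margK_sum k ν hval.nu_sum
    set ρ := margK k ν true with hρdef
    have hρ1 : ρ < 1 := by linarith
    have hmf : margK k ν false = 1 - ρ := by linarith
    have hFinNe : (univ : Finset (Fin d)).Nonempty := ⟨i0, mem_univ _⟩
    set m := univ.inf' hFinNe (fun c2 : Fin d => min (θ j2 c2 true) (1 - θ j2 c2 true))
      with hmdef
    have hmpos : 0 < m := by
      rw [hmdef, Finset.lt_inf'_iff]
      intro c2 _
      exact lt_min (hval.theta_pos j2 c2 true) (by linarith [hval.theta_lt_one j2 c2 true])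
    set ε := m / 2 with hεdef
    have hεpos : 0 < ε := by rw [hεdef]; linarith
    have hεlt : ∀ c2, ε < θ j2 c2 true := by
      intro c2
      have h1 : m ≤ min (θ j2 c2 true) (1 - θ j2 c2 true) := Finset.inf'_le _ (mem_univ c2)
      have h2 := min_le_left (θ j2 c2 true) (1 - θ j2 c2 true)
      rw [hεdef]; linarith
    have hεlt1 : ∀ c2, ε < 1 - θ j2 c2 true := by
      intro c2
      have h1 : m ≤ min (θ j2 c2 true) (1 - θ j2 c2 true) := Finset.inf'_le _ (mem_univ c2)
      have h2 := min_le_right (θ j2 c2 true) (1 - θ j2 c2 true)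
      rw [hεdef]; linarith
    have hε1 : ε < 1 := by
      have h1 := hεlt i0
      linarith [hval.theta_lt_one j2 i0 true]
    set D := ρ * ε + (1 - ρ) with hDdef
    have hDpos : 0 < D := by rw [hDdef]; nlinarith
    have h1ε : (0:ℝ) < 1 - ε := by linarith
    have h1ρ : (0:ℝ) < 1 - ρ := by linarith
    set θ2 : Fin p → Fin d → Bool → ℝ := fun j c x =>
      if j = j1 ∧ x = false then (ρ * ε * θ j1 c true + (1 - ρ) * θ j1 c false) / D
      else if j = j2 ∧ x = true then (θ j2 c true - ε * θ j2 c false) / (1 - ε)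
      else θ j c x with hθ2def
    set ν2 : (Fin K → Bool) → ℝ :=
      fun α => ν α * (if α k then 1 - ε else D / (1 - ρ)) with hν2def
    have hθ2_j1t : ∀ c, θ2 j1 c true = θ j1 c true := by
      intro c; simp [hθ2def, hne12]
    have hθ2_j1f : ∀ c, θ2 j1 c false
        = (ρ * ε * θ j1 c true + (1 - ρ) * θ j1 c false) / D := by
      intro c; simp [hθ2def]
    have hθ2_j2t : ∀ c, θ2 j2 c true = (θ j2 c true - ε * θ j2 c false) / (1 - ε) := by
      intro c; simp [hθ2def, Ne.symm hne12]
    have hθ2_j2f : ∀ c, θ2 j2 c false = θ j2 c false := by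
      intro c; simp [hθ2def, Ne.symm hne12]
    have hθ2_other : ∀ j, j ≠ j1 → j ≠ j2 → ∀ c x, θ2 j c x = θ j c x := by
      intro j hj1 hj2 c x; simp [hθ2def, hj1, hj2]
    have hval2 : BlessValid θ2 ν2 := by
      constructor
      · intro j c x
        by_cases hA : j = j1 ∧ x = false
        · rw [hA.1, hA.2, hθ2_j1f]
          apply div_pos _ hDpos
          nlinarith [mul_pos (mul_pos hρpos hεpos) (hval.theta_pos j1 c true),
            mul_pos h1ρ (hval.theta_pos j1 c false)]
        · by_cases hB : j = j2 ∧ x = true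
          · rw [hB.1, hB.2, hθ2_j2t]
            apply div_pos _ h1ε
            nlinarith [hεlt c, hval.theta_lt_one j2 c false, hεpos,
              hval.theta_pos j2 c false]
          · have heq : θ2 j c x = θ j c x := by simp [hθ2def, hA, hB]
            rw [heq]; exact hval.theta_pos j c x
      · intro j c x
        by_cases hA : j = j1 ∧ x = false
        · rw [hA.1, hA.2, hθ2_j1f, div_lt_one hDpos, hDdef]
          nlinarith [mul_pos hρpos hεpos, hval.theta_lt_one j1 c true,
            hval.theta_lt_one j1 c false, h1ρ]
        · by_cases hB : j = j2 ∧ x = true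
          · rw [hB.1, hB.2, hθ2_j2t, div_lt_one h1ε]
            nlinarith [mul_pos hεpos (hval.theta_pos j2 c false), hεlt1 c]
          · have heq : θ2 j c x = θ j c x := by simp [hθ2def, hA, hB]
            rw [heq]; exact hval.theta_lt_one j c x
      · intro j x
        by_cases hj1c : j = j1
        · rw [hj1c]
          cases x
          · rw [Finset.sum_congr rfl fun c _ => hθ2_j1f c, ← Finset.sum_div,
              Finset.sum_add_distrib, ← Finset.mul_sum, ← Finset.mul_sum,
              hval.theta_sum j1 true, hval.theta_sum j1 false, mul_one, mul_one, ← hDdef]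
            exact div_self hDpos.ne'
          · rw [Finset.sum_congr rfl fun c _ => hθ2_j1t c]
            exact hval.theta_sum j1 true
        · by_cases hj2c : j = j2
          · rw [hj2c]
            cases x
            · rw [Finset.sum_congr rfl fun c _ => hθ2_j2f c]
              exact hval.theta_sum j2 false
            · rw [Finset.sum_congr rfl fun c _ => hθ2_j2t c, ← Finset.sum_div,
                Finset.sum_sub_distrib, ← Finset.mul_sum,
                hval.theta_sum j2 true, hval.theta_sum j2 false, mul_one]
              exact div_self h1ε.ne'
          · rw [Finset.sum_congr rfl fun c _ => hθ2_other j hj1c hj2c c x]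
            exact hval.theta_sum j x
      · intro j c hc
        by_cases hj1c : j = j1
        · rw [hj1c, hθ2_j1f, hθ2_j1t, div_lt_iff₀ hDpos, hDdef]
          nlinarith [mul_pos h1ρ (sub_pos.mpr (hval.theta_mono j1 c hc)),
            mul_pos hρpos hεpos]
        · by_cases hj2c : j = j2
          · rw [hj2c, hθ2_j2f, hθ2_j2t, lt_div_iff₀ h1ε]
            nlinarith [hval.theta_mono j2 c hc, hεpos]
          · rw [hθ2_other j hj1c hj2c c false, hθ2_other j hj1c hj2c c true]
            exact hval.theta_mono j c hc
      · intro α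
        apply mul_pos (hval.nu_pos α)
        cases hαk : α k
        · simp only [hαk, Bool.false_eq_true, if_false]
          exact div_pos hDpos h1ρ
        · simp only [hαk, if_true]
          exact h1ε
      · rw [← Finset.sum_fiberwise univ (fun α : Fin K → Bool => α k) ν2, Fintype.sum_bool]
        have hT : ∑ α ∈ univ.filter (fun α : Fin K → Bool => α k = true), ν2 α
            = (1 - ε) * ρ := by
          have hc : ∀ α ∈ univ.filter (fun α : Fin K → Bool => α k = true),
              ν2 α = (1 - ε) * ν α := by
            intro α hα
            have hαk : α k = true := (Finset.mem_filter.mp hα).2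
            simp only [hν2def, hαk, if_true]
            ring
          rw [Finset.sum_congr rfl hc, ← Finset.mul_sum, hρdef]
          rfl
        have hF : ∑ α ∈ univ.filter (fun α : Fin K → Bool => α k = false), ν2 α
            = (D / (1 - ρ)) * (1 - ρ) := by
          have hc : ∀ α ∈ univ.filter (fun α : Fin K → Bool => α k = false),
              ν2 α = (D / (1 - ρ)) * ν α := by
            intro α hα
            have hαk : α k = false := (Finset.mem_filter.mp hα).2
            simp only [hν2def, hαk, Bool.false_eq_true, if_false]
            ring
          rw [Finset.sum_congr rfl hc, ← Finset.mul_sum]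
          congr 1
        rw [hT, hF, div_mul_cancel₀ _ h1ρ.ne', hDdef]
        ring
    have hpmf2 : ∀ c, blessPMF s θ2 ν2 c = blessPMF s θ ν c := by
      intro c
      have hprodEq : ∀ α : Fin K → Bool,
          ∏ j ∈ (univ.erase j1).erase j2, θ2 j (c j) (α (s j))
            = ∏ j ∈ (univ.erase j1).erase j2, θ j (c j) (α (s j)) := by
        intro α
        refine Finset.prod_congr rfl fun j hj => ?_
        have hj' := Finset.mem_erase.mp hj
        have hj'' := Finset.mem_erase.mp hj'.2
        exact hθ2_other j hj''.1 hj'.1 (c j) (α (s j))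
      have hfibU : ∀ aa : Bool,
          ∑ α ∈ univ.filter (fun α : Fin K → Bool => α k = aa),
            ν α * ∏ j ∈ (univ.erase j1).erase j2, θ j (c j) (α (s j))
          = margK k ν aa *
            ∑ α ∈ univ.filter (fun α : Fin K → Bool => α k = true),
              margRest k ν α * ∏ j ∈ (univ.erase j1).erase j2, θ j (c j) (α (s j)) := by
        intro aa
        have s2 : ∑ α ∈ univ.filter (fun α : Fin K → Bool => α k = aa),
            ν α * ∏ j ∈ (univ.erase j1).erase j2, θ j (c j) (α (s j))
            = margK k ν aa * ∑ α ∈ univ.filter (fun α : Fin K → Bool => α k = aa),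
                margRest k ν α * ∏ j ∈ (univ.erase j1).erase j2, θ j (c j) (α (s j)) := by
          rw [Finset.mul_sum]
          refine Finset.sum_congr rfl fun α hα => ?_
          have hαk : α k = aa := (Finset.mem_filter.mp hα).2
          have hind : ν α = margK k ν (α k) * margRest k ν α := by
            rw [margK_eq_sum_ite]
            exact hindep α
          rw [hind, hαk]
          ring
        have s3 : ∑ α ∈ univ.filter (fun α : Fin K → Bool => α k = aa),
            margRest k ν α * ∏ j ∈ (univ.erase j1).erase j2, θ j (c j) (α (s j))
            = ∑ α ∈ univ.filter (fun α : Fin K → Bool => α k = true),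
                margRest k ν α * ∏ j ∈ (univ.erase j1).erase j2, θ j (c j) (α (s j)) := by
          refine Finset.sum_nbij' (fun α => Function.update α k true)
            (fun α => Function.update α k aa) ?_ ?_ ?_ ?_ ?_
          · intro α hα
            simp [Function.update_self]
          · intro α hα
            simp [Function.update_self]
          · intro α hα
            have hαk : α k = aa := (Finset.mem_filter.mp hα).2
            simp only [Function.update_idem]
            rw [← hαk, Function.update_eq_self]
          · intro α hα
            have hαk : α k = true := (Finset.mem_filter.mp hα).2
            simp only [Function.update_idem]
            rw [← hαk, Function.update_eq_self]
          · intro α hα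
            beta_reduce
            rw [margRest_update k ν α true]
            congr 1
            refine Finset.prod_congr rfl fun j hj => ?_
            rw [Function.update_of_ne (hEk j hj)]
        rw [s2, s3]
      have hfib2 : ∀ aa : Bool,
          ∑ α ∈ univ.filter (fun α : Fin K → Bool => α k = aa),
            ν2 α * ∏ j ∈ (univ.erase j1).erase j2, θ2 j (c j) (α (s j))
          = (if aa then 1 - ε else D / (1 - ρ)) * (margK k ν aa *
              ∑ α ∈ univ.filter (fun α : Fin K → Bool => α k = true),
                margRest k ν α * ∏ j ∈ (univ.erase j1).erase j2, θ j (c j) (α (s j))) := by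
        intro aa
        rw [← hfibU aa, Finset.mul_sum]
        refine Finset.sum_congr rfl fun α hα => ?_
        have hαk : α k = aa := (Finset.mem_filter.mp hα).2
        rw [hprodEq α]
        simp only [hν2def, hαk]
        cases aa
        · simp only [Bool.false_eq_true, if_false]
          ring
        · simp only [if_true]
          ring
      rw [pmf_split s k hne12 hsj1 hsj2 θ2 ν2 c, pmf_split s k hne12 hsj1 hsj2 θ ν c,
        Fintype.sum_bool, Fintype.sum_bool, hfib2 true, hfib2 false, hfibU true, hfibU false,
        hθ2_j1t (c j1), hθ2_j1f (c j1), hθ2_j2t (c j2), hθ2_j2f (c j2)]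
      rw [hmf]
      have htt : (if (true = true) then (1-ε) else D/(1-ρ)) = 1-ε := if_pos rfl
      have hff : (if (false = true) then (1-ε) else D/(1-ρ)) = D/(1-ρ) := if_neg (by simp)
      rw [htt, hff]
      field_simp
      ring
    have hcon := hid θ2 ν2 hval2 hpmf2 j1 hsj1 i0 false
    rw [hθ2_j1f i0, div_eq_iff hDpos.ne', hDdef] at hcon
    have hmono := hval.theta_mono j1 i0 hi0d
    nlinarith [mul_pos (mul_pos hρpos hεpos) (sub_pos.mpr hmono)]
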